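/- arXiv:1903.00887 — 4 statements merged into one kernel-verified Lean document; each statement's English description precedes it below -/
import Mathlib

section
/- Let μ be a positive Borel measure on ℂ of finite upper density at order 1, i.e. sup over r ≥ 1 of μ(D̄(0,r))/r < ∞. Then for any fixed r₀ > 0, the difference between l_μ(r,R) := max{∫_{r<|z|≤R, Re z>0} Re(1/z) dμ, ∫_{r<|z|≤R, Re z<0} Re(−1/z) dμ} and l̄_μ(r,R) := max{∫_r^R μ(t;cos⁺)/t² dt, ∫_r^R μ(t;cos⁻)/t² dt} is bounded uniformly over all r₀ ≤ r < R < ∞. -/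
open MeasureTheory Complex

namespace Stmt1Aux

lemma integral_inv_sq {a b : ℝ} (ha : 0 < a) (hab : a ≤ b) :
    ∫ t in a..b, (t ^ 2)⁻¹ = a⁻¹ - b⁻¹ := by
  have hderiv : ∀ t ∈ Set.uIcc a b, HasDerivAt (fun x : ℝ => -x⁻¹) ((t ^ 2)⁻¹) t := by
    intro t ht
    rw [Set.uIcc_of_le hab] at ht
    have ht0 : t ≠ 0 := ne_of_gt (lt_of_lt_of_le ha ht.1)
    have h := (hasDerivAt_inv ht0).neg
    rw [neg_neg] at h
    exact h
  have hint : IntervalIntegrable (fun t : ℝ => (t ^ 2)⁻¹) volume a b := by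
    apply ContinuousOn.intervalIntegrable
    apply ContinuousOn.inv₀ (by fun_prop)
    intro t ht
    rw [Set.uIcc_of_le hab] at ht
    exact pow_ne_zero 2 (ne_of_gt (lt_of_lt_of_le ha ht.1))
  have := intervalIntegral.integral_eq_sub_of_hasDerivAt hderiv hint
  rw [this]; ring

lemma re_formula {z : ℂ} (hz : z ≠ 0) :
    (1 / z).re = Real.cos z.arg / ‖z‖ := by
  rw [one_div, Complex.inv_re, Complex.normSq_eq_norm_sq, sq, ← div_div, Complex.cos_arg hz]

lemma key (μ : Measure ℂ) (C : ℝ) (hC0 : 0 ≤ C)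
    (hC : ∀ r : ℝ, 1 ≤ r → μ (Metric.closedBall 0 r) ≤ ENNReal.ofReal (C * r))
    (g f : ℂ → ℝ) (hg_meas : Measurable g) (hg0 : ∀ z, 0 ≤ g z) (hg1 : ∀ z, g z ≤ 1)
    (P : Set ℂ) (hP : MeasurableSet P)
    (hf : ∀ z ∈ P, f z = g z / ‖z‖)
    (hgP : ∀ z, z ≠ 0 → z ∉ P → g z = 0)
    {r₀ r R : ℝ} (hr₀ : 0 < r₀) (hr : r₀ ≤ r) (hrR : r < R) :
    |(∫ z in {z : ℂ | r < ‖z‖ ∧ ‖z‖ ≤ R ∧ z ∈ P}, f z ∂μ)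
      - ∫ t in r..R, (∫ z in Metric.closedBall (0 : ℂ) t, g z ∂μ) / t ^ 2|
      ≤ C * max 1 r₀⁻¹ := by
  have hr0 : 0 < r := lt_of_lt_of_le hr₀ hr
  have hR0 : 0 < R := lt_trans hr0 hrR
  have habs : Measurable (fun z : ℂ => ‖z‖) := continuous_norm.measurable
  -- basic measure facts
  have ball_bd : ∀ t : ℝ, μ (Metric.closedBall 0 t) ≤ ENNReal.ofReal (C * max t 1) := by
    intro t
    calc μ (Metric.closedBall 0 t) ≤ μ (Metric.closedBall 0 (max t 1)) :=
          measure_mono (Metric.closedBall_subset_closedBall (le_max_left _ _))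
      _ ≤ _ := hC _ (le_max_right _ _)
  have ball_ne : ∀ t : ℝ, μ (Metric.closedBall (0:ℂ) t) ≠ ⊤ :=
    fun t => ((ball_bd t).trans_lt ENNReal.ofReal_lt_top).ne
  have ball_toReal : ∀ t : ℝ, (μ (Metric.closedBall (0:ℂ) t)).toReal ≤ C * max t 1 := by
    intro t
    exact ENNReal.toReal_le_of_le_ofReal
      (mul_nonneg hC0 (le_trans zero_le_one (le_max_right _ _))) (ball_bd t)
  set S : Set ℂ := {z : ℂ | r < ‖z‖ ∧ ‖z‖ ≤ R ∧ z ∈ P} with hSdef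
  have hS : MeasurableSet S := by
    apply MeasurableSet.inter
    · exact measurableSet_lt measurable_const habs
    · exact (measurableSet_le habs measurable_const).inter hP
  have hSsub : S ⊆ Metric.closedBall 0 R := by
    intro z hz
    simpa [Metric.mem_closedBall, Complex.dist_eq] using hz.2.1
  have μS_ne : μ S ≠ ⊤ := ((measure_mono hSsub).trans_lt (ball_ne R).lt_top).ne
  -- integrability of g on finite-measure sets
  have int_g : ∀ E : Set ℂ, μ E ≠ ⊤ → IntegrableOn g E μ := by
    intro E hE
    haveI : IsFiniteMeasure (μ.restrict E) :=
      ⟨by rw [Measure.restrict_apply_univ]; exact hE.lt_top⟩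
    exact (integrable_const 1).mono' hg_meas.aestronglyMeasurable
      (Filter.Eventually.of_forall fun z => by
        rw [Real.norm_eq_abs, _root_.abs_of_nonneg (hg0 z)]; exact hg1 z)
  haveI : IsFiniteMeasure (μ.restrict S) :=
    ⟨by rw [Measure.restrict_apply_univ]; exact μS_ne.lt_top⟩
  -- the kernel
  set ν₂ : Measure ℝ := volume.restrict (Set.Ioc r R) with hν₂def
  haveI : IsFiniteMeasure ν₂ :=
    ⟨by rw [hν₂def, Measure.restrict_apply_univ]; exact measure_Ioc_lt_top⟩
  set k : ℂ → ℝ → ℝ := fun z t => if ‖z‖ ≤ t then g z / t ^ 2 else 0 with hkdef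
  have hk_meas : Measurable (Function.uncurry k) := by
    have hset : MeasurableSet {p : ℂ × ℝ | ‖p.1‖ ≤ p.2} :=
      measurableSet_le (habs.comp measurable_fst) measurable_snd
    exact Measurable.ite hset ((hg_meas.comp measurable_fst).div (measurable_snd.pow_const 2))
      measurable_const
  have hk_int : Integrable (Function.uncurry k) ((μ.restrict S).prod ν₂) := by
    apply (integrable_const ((r ^ 2)⁻¹)).mono' hk_meas.aestronglyMeasurable
    have hae : ∀ᵐ p : ℂ × ℝ ∂((μ.restrict S).prod ν₂), p.2 ∈ Set.Ioc r R := by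
      rw [ae_iff]
      have he : {p : ℂ × ℝ | ¬ p.2 ∈ Set.Ioc r R} = Set.univ ×ˢ (Set.Ioc r R)ᶜ := by
        ext p; simp
      rw [he, Measure.prod_prod]
      rw [hν₂def, Measure.restrict_apply measurableSet_Ioc.compl]
      simp
    filter_upwards [hae] with p hp
    have ht : r < p.2 := hp.1
    rw [Real.norm_eq_abs]
    by_cases h : ‖p.1‖ ≤ p.2
    · rw [show Function.uncurry k p = g p.1 / p.2 ^ 2 by
        simp [hkdef, Function.uncurry, if_pos h]]
      rw [_root_.abs_of_nonneg (div_nonneg (hg0 _) (sq_nonneg _))]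
      rw [← one_div]
      apply div_le_div₀ (by norm_num) (hg1 _) (by positivity)
      exact pow_le_pow_left₀ hr0.le ht.le 2
    · rw [show Function.uncurry k p = 0 by simp [hkdef, Function.uncurry, if_neg h]]
      rw [abs_zero]
      positivity
  -- pointwise identity on S
  have hpt : Set.EqOn f (fun z => g z / R + ∫ t, k z t ∂ν₂) S := by
    intro z hz
    obtain ⟨hz1, hz2, hzP⟩ := hz
    have hz0 : z ≠ 0 := by
      intro h; rw [h] at hz1; simp at hz1; linarith
    have haz : 0 < ‖z‖ := lt_trans hr0 hz1
    have calc1 : ∫ t, k z t ∂ν₂ = g z * ((‖z‖)⁻¹ - R⁻¹) := by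
      have e1 : (fun t => k z t) = Set.indicator (Set.Ici (‖z‖))
          (fun t => g z / t ^ 2) := by
        funext t
        simp [hkdef, Set.indicator_apply, Set.mem_Ici]
      rw [hν₂def]
      rw [e1, integral_indicator measurableSet_Ici,
        Measure.restrict_restrict measurableSet_Ici]
      have e2 : Set.Ici (‖z‖) ∩ Set.Ioc r R = Set.Icc (‖z‖) R := by
        ext t
        simp only [Set.mem_inter_iff, Set.mem_Ici, Set.mem_Ioc, Set.mem_Icc]
        constructor
        · rintro ⟨h1, _, h3⟩; exact ⟨h1, h3⟩
        · rintro ⟨h1, h2⟩; exact ⟨h1, lt_of_lt_of_le hz1 h1, h2⟩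
      rw [e2, integral_Icc_eq_integral_Ioc, ← intervalIntegral.integral_of_le hz2]
      simp_rw [div_eq_mul_inv]
      rw [intervalIntegral.integral_const_mul, integral_inv_sq haz hz2]
    show f z = g z / R + ∫ t, k z t ∂ν₂
    rw [calc1, hf z hzP]
    field_simp
    ring
  have int1 : IntegrableOn (fun z => g z / R) S μ := (int_g S μS_ne).div_const R
  have int2 : Integrable (fun z => ∫ t, k z t ∂ν₂) (μ.restrict S) := by
    have := hk_int.integral_prod_left
    simpa [Function.uncurry] using this
  set ν : ℝ → ℝ := fun t => ∫ z in S ∩ {z | ‖z‖ ≤ t}, g z ∂μ with hνdef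
  have stepL : ∫ z in S, f z ∂μ
      = (∫ z in S, g z ∂μ) / R + ∫ t in Set.Ioc r R, ν t / t ^ 2 := by
    rw [setIntegral_congr_fun hS hpt, integral_add int1 int2, integral_div]
    congr 1
    rw [integral_integral_swap hk_int]
    apply setIntegral_congr_fun measurableSet_Ioc
    intro t ht
    show (∫ z, k z t ∂(μ.restrict S)) = ν t / t ^ 2
    have e1 : (fun z => k z t) = Set.indicator {z | ‖z‖ ≤ t}
        (fun z => g z / t ^ 2) := by
      funext z
      simp [hkdef, Set.indicator_apply]
    rw [show (∫ z, k z t ∂(μ.restrict S)) = ∫ z, Set.indicator {z | ‖z‖ ≤ t}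
        (fun z => g z / t ^ 2) z ∂(μ.restrict S) by rw [← e1], integral_indicator (measurableSet_le habs measurable_const),
      Measure.restrict_restrict (measurableSet_le habs measurable_const),
      Set.inter_comm, integral_div]
  -- decomposition of the ball integral
  set c₀ : ℝ := ∫ z in Metric.closedBall (0:ℂ) r, g z ∂μ with hc₀def
  have hsub_ball : ∀ t : ℝ, S ∩ {z : ℂ | ‖z‖ ≤ t} ⊆ Metric.closedBall 0 t := by
    intro t z hz
    simpa [Metric.mem_closedBall, Complex.dist_eq] using hz.2
  have int_ν : ∀ t : ℝ, IntegrableOn g (S ∩ {z : ℂ | ‖z‖ ≤ t}) μ := by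
    intro t
    exact (int_g S μS_ne).mono_set Set.inter_subset_left
  have ball_decomp : ∀ t : ℝ, r ≤ t → t ≤ R →
      ∫ z in Metric.closedBall (0:ℂ) t, g z ∂μ = c₀ + ν t := by
    intro t h1 h2
    have hDiff : Metric.closedBall (0:ℂ) t \ Metric.closedBall 0 r
        = {z : ℂ | r < ‖z‖ ∧ ‖z‖ ≤ t} := by
      ext z
      simp only [Set.mem_diff, Metric.mem_closedBall, Complex.dist_eq, sub_zero,
        not_le, Set.mem_setOf_eq]
      tauto
    have hsub_t : Metric.closedBall (0:ℂ) r ⊆ Metric.closedBall 0 t :=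
      Metric.closedBall_subset_closedBall h1
    have hsplit : Metric.closedBall (0:ℂ) t
        = Metric.closedBall 0 r ∪ (Metric.closedBall (0:ℂ) t \ Metric.closedBall 0 r) :=
      (Set.union_diff_cancel hsub_t).symm
    have hDiffMeas : MeasurableSet (Metric.closedBall (0:ℂ) t \ Metric.closedBall 0 r) :=
      measurableSet_closedBall.diff measurableSet_closedBall
    rw [hsplit, setIntegral_union Set.disjoint_sdiff_right hDiffMeas
      (int_g _ (ball_ne r)) ((int_g _ (ball_ne t)).mono_set Set.diff_subset)]
    congr 1
    rw [hDiff]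
    have hsubt : {z : ℂ | r < ‖z‖ ∧ ‖z‖ ≤ t} ⊆ Metric.closedBall 0 t := by
      intro z hz
      simpa [Metric.mem_closedBall, Complex.dist_eq] using hz.2
    have hsplit2 : {z : ℂ | r < ‖z‖ ∧ ‖z‖ ≤ t}
        = (S ∩ {z | ‖z‖ ≤ t})
          ∪ ({z : ℂ | r < ‖z‖ ∧ ‖z‖ ≤ t} \ P) := by
      ext z
      simp only [Set.mem_union, Set.mem_inter_iff, Set.mem_setOf_eq, Set.mem_diff, hSdef]
      constructor
      · intro hz
        by_cases hzP : z ∈ P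
        · exact Or.inl ⟨⟨hz.1, le_trans hz.2 h2, hzP⟩, hz.2⟩
        · exact Or.inr ⟨hz, hzP⟩
      · rintro (⟨⟨ha, _, _⟩, hd⟩ | ⟨hz, _⟩)
        · exact ⟨ha, hd⟩
        · exact hz
    have hmeas2 : MeasurableSet ({z : ℂ | r < ‖z‖ ∧ ‖z‖ ≤ t} \ P) :=
      ((measurableSet_lt measurable_const habs).inter
        (measurableSet_le habs measurable_const)).diff hP
    have hdisj : Disjoint (S ∩ {z : ℂ | ‖z‖ ≤ t})
        ({z : ℂ | r < ‖z‖ ∧ ‖z‖ ≤ t} \ P) := by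
      rw [Set.disjoint_left]
      rintro z ⟨hz1, _⟩ ⟨_, hz3⟩
      exact hz3 hz1.2.2
    rw [hsplit2, setIntegral_union hdisj hmeas2 (int_ν t)
      ((int_g _ (ball_ne t)).mono_set (fun z hz => hsubt hz.1))]
    have hzero : ∫ z in {z : ℂ | r < ‖z‖ ∧ ‖z‖ ≤ t} \ P, g z ∂μ = 0 := by
      rw [setIntegral_congr_fun (hmeas2) (g := fun _ => (0:ℝ))
        (fun z hz => hgP z (by
          intro h0
          have := hz.1.1
          rw [h0] at this
          simp at this
          linarith) hz.2)]
      simp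
    rw [hzero, add_zero]
  -- ν is monotone, hence measurable
  have hν_mono : Monotone ν := by
    intro a b hab
    apply setIntegral_mono_set (int_ν b)
      (Filter.Eventually.of_forall fun z => hg0 z)
    apply HasSubset.Subset.eventuallyLE
    exact Set.inter_subset_inter_right _ (fun z hz => le_trans hz hab)
  have hν_nonneg : ∀ t, 0 ≤ ν t := fun t =>
    setIntegral_nonneg (hS.inter (measurableSet_le habs measurable_const))
      (fun z _ => hg0 z)
  have hν_le : ∀ t, ν t ≤ (μ S).toReal := by
    intro t
    calc ν t ≤ ∫ z in S ∩ {z : ℂ | ‖z‖ ≤ t}, (1:ℝ) ∂μ :=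
          integral_mono (int_ν t) (by
            haveI : IsFiniteMeasure (μ.restrict (S ∩ {z : ℂ | ‖z‖ ≤ t})) :=
              ⟨by
                rw [Measure.restrict_apply_univ]
                exact ((measure_mono Set.inter_subset_left).trans_lt μS_ne.lt_top)⟩
            exact integrable_const 1) (fun z => hg1 z)
      _ = (μ (S ∩ {z : ℂ | ‖z‖ ≤ t})).toReal := by
          rw [setIntegral_const]; simp [Measure.real]
      _ ≤ (μ S).toReal := ENNReal.toReal_mono μS_ne (measure_mono Set.inter_subset_left)
  -- the averaged side
  have int_c : IntegrableOn (fun t => c₀ / t ^ 2) (Set.Ioc r R) volume := by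
    have hcont : ContinuousOn (fun t : ℝ => c₀ / t ^ 2) (Set.Icc r R) := by
      apply ContinuousOn.div continuousOn_const (by fun_prop)
      intro t ht
      exact pow_ne_zero 2 (ne_of_gt (lt_of_lt_of_le hr0 ht.1))
    exact (hcont.integrableOn_compact isCompact_Icc).mono_set Set.Ioc_subset_Icc_self
  have int_νt : IntegrableOn (fun t => ν t / t ^ 2) (Set.Ioc r R) volume := by
    have hmeas : Measurable fun t => ν t / t ^ 2 :=
      (hν_mono.measurable).div (measurable_id.pow_const 2)
    apply (integrable_const ((μ S).toReal * (r ^ 2)⁻¹)).mono' hmeas.aestronglyMeasurable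
    filter_upwards [ae_restrict_mem measurableSet_Ioc] with t ht
    rw [Real.norm_eq_abs, _root_.abs_of_nonneg (div_nonneg (hν_nonneg t) (sq_nonneg t))]
    rw [div_eq_mul_inv]
    have htpos : 0 < t := lt_trans hr0 ht.1
    apply mul_le_mul (hν_le t) _ (by positivity) ENNReal.toReal_nonneg
    rw [inv_le_inv₀ (by positivity) (by positivity)]
    exact pow_le_pow_left₀ hr0.le ht.1.le 2
  have stepM : ∫ t in r..R, (∫ z in Metric.closedBall (0:ℂ) t, g z ∂μ) / t ^ 2
      = c₀ * (r⁻¹ - R⁻¹) + ∫ t in Set.Ioc r R, ν t / t ^ 2 := by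
    rw [intervalIntegral.integral_of_le hrR.le]
    rw [setIntegral_congr_fun measurableSet_Ioc
      (g := fun t => c₀ / t ^ 2 + ν t / t ^ 2)
      (fun t ht => by rw [ball_decomp t ht.1.le ht.2, add_div])]
    rw [integral_add int_c int_νt]
    congr 1
    rw [← intervalIntegral.integral_of_le hrR.le]
    simp_rw [div_eq_mul_inv]
    rw [intervalIntegral.integral_const_mul, integral_inv_sq hr0 hrR.le]
  -- final bounds
  have hK0 : (0:ℝ) ≤ C * max 1 r₀⁻¹ :=
    mul_nonneg hC0 (le_trans zero_le_one (le_max_left _ _))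
  have hgS_nonneg : 0 ≤ ∫ z in S, g z ∂μ := setIntegral_nonneg hS (fun z _ => hg0 z)
  have hgS_le : ∫ z in S, g z ∂μ ≤ C * max R 1 := by
    calc ∫ z in S, g z ∂μ ≤ ∫ z in S, (1:ℝ) ∂μ :=
          integral_mono (int_g S μS_ne) (integrable_const 1) (fun z => hg1 z)
      _ = (μ S).toReal := by rw [setIntegral_const]; simp [Measure.real]
      _ ≤ (μ (Metric.closedBall 0 R)).toReal :=
          ENNReal.toReal_mono (ball_ne R) (measure_mono hSsub)
      _ ≤ C * max R 1 := ball_toReal R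
  have hc₀_nonneg : 0 ≤ c₀ :=
    setIntegral_nonneg measurableSet_closedBall (fun z _ => hg0 z)
  have hc₀_le : c₀ ≤ C * max r 1 := by
    calc c₀ ≤ ∫ z in Metric.closedBall (0:ℂ) r, (1:ℝ) ∂μ := by
          apply integral_mono (int_g _ (ball_ne r)) _ (fun z => hg1 z)
          haveI : IsFiniteMeasure (μ.restrict (Metric.closedBall (0:ℂ) r)) :=
            ⟨by rw [Measure.restrict_apply_univ]; exact (ball_ne r).lt_top⟩
          exact integrable_const 1
      _ = (μ (Metric.closedBall (0:ℂ) r)).toReal := by rw [setIntegral_const]; simp [Measure.real]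
      _ ≤ C * max r 1 := ball_toReal r
  have hA_nonneg : 0 ≤ (∫ z in S, g z ∂μ) / R := div_nonneg hgS_nonneg hR0.le
  have hA_le : (∫ z in S, g z ∂μ) / R ≤ C * max 1 r₀⁻¹ := by
    calc (∫ z in S, g z ∂μ) / R ≤ (C * max R 1) / R := by
          gcongr
      _ = C * (max R 1 / R) := by ring
      _ = C * max 1 R⁻¹ := by
          rw [← max_div_div_right hR0.le, div_self hR0.ne', one_div]
      _ ≤ C * max 1 r₀⁻¹ := by
          apply mul_le_mul_of_nonneg_left _ hC0
          exact max_le_max le_rfl (inv_anti₀ hr₀ (le_trans hr hrR.le))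
  have hB_nonneg : 0 ≤ c₀ * (r⁻¹ - R⁻¹) := by
    apply mul_nonneg hc₀_nonneg
    rw [sub_nonneg]
    exact inv_anti₀ hr0 hrR.le
  have hB_le : c₀ * (r⁻¹ - R⁻¹) ≤ C * max 1 r₀⁻¹ := by
    calc c₀ * (r⁻¹ - R⁻¹) ≤ c₀ * r⁻¹ := by
          apply mul_le_mul_of_nonneg_left _ hc₀_nonneg
          simp [sub_le_self_iff, inv_nonneg, hR0.le]
      _ ≤ (C * max r 1) * r⁻¹ :=
          mul_le_mul_of_nonneg_right hc₀_le (inv_nonneg.mpr hr0.le)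
      _ = C * (max r 1 * r⁻¹) := by ring
      _ = C * max 1 r⁻¹ := by
          rw [max_mul_of_nonneg _ _ (inv_nonneg.mpr hr0.le), mul_inv_cancel₀ hr0.ne', one_mul]
      _ ≤ C * max 1 r₀⁻¹ := by
          apply mul_le_mul_of_nonneg_left _ hC0
          exact max_le_max le_rfl (inv_anti₀ hr₀ hr)
  have hdiff : (∫ z in S, f z ∂μ)
      - (∫ t in r..R, (∫ z in Metric.closedBall (0:ℂ) t, g z ∂μ) / t ^ 2)
      = (∫ z in S, g z ∂μ) / R - c₀ * (r⁻¹ - R⁻¹) := by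
    rw [stepL, stepM]; ring
  rw [hdiff, abs_le]
  constructor
  · linarith
  · linarith

end Stmt1Aux

open Stmt1Aux in
/-- For a positive Borel measure `μ` on `ℂ` of finite upper density at order 1,
the logarithmic interval function `l_μ(r,R)` and its averaged variant `l̄_μ(r,R)`
differ by a uniformly bounded quantity on `r₀ ≤ r < R < ∞`. -/
theorem stmt1
    (μ : Measure ℂ) (C : ℝ)
    (hC : ∀ r : ℝ, 1 ≤ r → μ (Metric.closedBall 0 r) ≤ ENNReal.ofReal (C * r))
    (r₀ : ℝ) (hr₀ : 0 < r₀) :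
    ∃ B : ℝ, ∀ r R : ℝ, r₀ ≤ r → r < R →
      |max (∫ z in {z : ℂ | r < ‖z‖ ∧ ‖z‖ ≤ R ∧ 0 < z.re},
              (1 / z).re ∂μ)
           (∫ z in {z : ℂ | r < ‖z‖ ∧ ‖z‖ ≤ R ∧ z.re < 0},
              (-(1 / z)).re ∂μ)
        - max (∫ t in r..R,
                (∫ z in Metric.closedBall (0 : ℂ) t, max (Real.cos z.arg) 0 ∂μ) / t ^ 2)
              (∫ t in r..R,
                (∫ z in Metric.closedBall (0 : ℂ) t, max (-Real.cos z.arg) 0 ∂μ) / t ^ 2)|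
      ≤ B := by
  set C' := max C 0 with hC'def
  have hC'0 : (0:ℝ) ≤ C' := le_max_right _ _
  have hC'bd : ∀ r : ℝ, 1 ≤ r → μ (Metric.closedBall 0 r) ≤ ENNReal.ofReal (C' * r) := by
    intro r hr
    exact (hC r hr).trans (ENNReal.ofReal_le_ofReal
      (mul_le_mul_of_nonneg_right (le_max_left _ _) (by linarith)))
  refine ⟨C' * max 1 r₀⁻¹, fun r R hr hrR => ?_⟩
  have hmeas1 : Measurable fun z : ℂ => max (Real.cos z.arg) 0 :=
    (Real.continuous_cos.measurable.comp Complex.measurable_arg).max measurable_const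
  have hmeas2 : Measurable fun z : ℂ => max (-Real.cos z.arg) 0 :=
    ((Real.continuous_cos.measurable.comp Complex.measurable_arg).neg).max measurable_const
  have h1 := Stmt1Aux.key μ C' hC'0 hC'bd (fun z => max (Real.cos z.arg) 0)
    (fun z => (1 / z).re) hmeas1 (fun z => le_max_right _ _)
    (fun z => max_le (Real.cos_le_one _) zero_le_one)
    {z : ℂ | 0 < z.re} (measurableSet_lt measurable_const Complex.measurable_re)
    (by
      intro z hz
      have hz0 : z ≠ 0 := by rintro rfl; simp at hz
      have hcos : 0 ≤ Real.cos z.arg := by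
        rw [Complex.cos_arg hz0]
        exact div_nonneg (le_of_lt hz) (norm_nonneg z)
      show (1 / z).re = max (Real.cos z.arg) 0 / ‖z‖
      rw [Stmt1Aux.re_formula hz0, max_eq_left hcos])
    (by
      intro z hz0 hzP
      have hre : z.re ≤ 0 := le_of_not_gt (by simpa using hzP)
      have hcos : Real.cos z.arg ≤ 0 := by
        rw [Complex.cos_arg hz0]
        exact div_nonpos_of_nonpos_of_nonneg hre (norm_nonneg z)
      exact max_eq_right hcos)
    hr₀ hr hrR
  have h2 := Stmt1Aux.key μ C' hC'0 hC'bd (fun z => max (-Real.cos z.arg) 0)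
    (fun z => (-(1 / z)).re) hmeas2 (fun z => le_max_right _ _)
    (fun z => max_le (by linarith [Real.neg_one_le_cos z.arg]) zero_le_one)
    {z : ℂ | z.re < 0} (measurableSet_lt Complex.measurable_re measurable_const)
    (by
      intro z hz
      have hz0 : z ≠ 0 := by rintro rfl; simp at hz
      have hcos : 0 ≤ -Real.cos z.arg := by
        rw [Complex.cos_arg hz0, neg_nonneg]
        exact div_nonpos_of_nonpos_of_nonneg (le_of_lt hz) (norm_nonneg z)
      show (-(1 / z)).re = max (-Real.cos z.arg) 0 / ‖z‖
      rw [Complex.neg_re, Stmt1Aux.re_formula hz0, max_eq_left hcos, neg_div])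
    (by
      intro z hz0 hzP
      have hre : 0 ≤ z.re := le_of_not_gt (by simpa using hzP)
      have hcos : -Real.cos z.arg ≤ 0 := by
        rw [Complex.cos_arg hz0, neg_nonpos]
        exact div_nonneg hre (norm_nonneg z)
      exact max_eq_right hcos)
    hr₀ hr hrR
  exact le_trans (abs_max_sub_max_le_max _ _ _ _) (max_le h1 h2)
end

section
/- Let q : ℝ₊ → ℝ₊ be increasing with ∫_1^∞ q(y)/y² dy < ∞, and let η be a positive Borel measure on ℂ of finite upper density at order 1 whose support is contained in the closed set {z : |Re z| ≤ q(|Im z|)}. Then ∫_{|z|>1, Re z>0} Re(1/z) dη(z) < ∞, i.e. η satisfies the Blaschke condition in the right half-plane. -/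
open MeasureTheory Complex

private lemma exists_dyadic {x : ℝ} (hx : 1 < x) :
    ∃ n : ℕ, (2:ℝ)^n < x ∧ x ≤ 2^(n+1) := by
  have h2 : ∃ N : ℕ, x ≤ 2^(N+1) := by
    obtain ⟨N, hN⟩ := pow_unbounded_of_one_lt x (by norm_num : (1:ℝ) < 2)
    exact ⟨N, hN.le.trans (pow_le_pow_right₀ (by norm_num) (Nat.le_succ N))⟩
  classical
  refine ⟨Nat.find h2, ?_, Nat.find_spec h2⟩
  rcases Nat.eq_zero_or_pos (Nat.find h2) with h0 | hp
  · rw [h0]; simpa using hx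
  · have hmin := Nat.find_min h2 (m := Nat.find h2 - 1) (by omega)
    push_neg at hmin
    calc (2:ℝ)^(Nat.find h2) = 2^(Nat.find h2 - 1 + 1) := by congr 1; omega
    _ < x := hmin

/-- If `q : ℝ₊ → ℝ₊` is increasing with `∫_1^∞ q(y)/y² dy < ∞` and `η` is a positive
Borel measure on `ℂ` of finite upper density at order 1 supported in
`{z : |Re z| ≤ q |Im z|}`, then `η` satisfies the Blaschke condition in the right
half-plane: `∫_{|z|>1, Re z>0} Re(1/z) dη < ∞`. -/
theorem stmt2
    (q : ℝ → ℝ) (hq0 : ∀ y, 0 ≤ q y) (hqmono : MonotoneOn q (Set.Ici 0))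
    (hqint : IntegrableOn (fun y : ℝ => q y / y ^ 2) (Set.Ici 1))
    (η : Measure ℂ) (C : ℝ)
    (hC : ∀ r : ℝ, 1 ≤ r → η (Metric.closedBall 0 r) ≤ ENNReal.ofReal (C * r))
    (hsupp : η {z : ℂ | ¬ |z.re| ≤ q |z.im|} = 0) :
    IntegrableOn (fun z : ℂ => (1 / z).re)
      {z : ℂ | 1 < ‖z‖ ∧ 0 < z.re} η := by
  -- notation
  set S : Set ℂ := {z : ℂ | 1 < ‖z‖ ∧ 0 < z.re} with hS
  have hSmeas : MeasurableSet S := by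
    have h1 : MeasurableSet {z : ℂ | 1 < ‖z‖} :=
      measurableSet_lt measurable_const continuous_norm.measurable
    have h2 : MeasurableSet {z : ℂ | 0 < z.re} :=
      measurableSet_lt measurable_const Complex.measurable_re
    exact h1.inter h2
  have hfmeas : Measurable fun z : ℂ => (1/z).re := by
    have : (fun z : ℂ => (1/z).re) = fun z : ℂ => z.re / Complex.normSq z := by
      funext z; rw [one_div, Complex.inv_re]
    rw [this]
    exact Complex.measurable_re.div Complex.continuous_normSq.measurable
  -- abbreviations
  set Q : ℕ → ℝ := fun n => q ((2:ℝ)^(n+1)) with hQ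
  have hQ0 : ∀ n, 0 ≤ Q n := fun n => hq0 _
  have hpow_pos : ∀ k : ℕ, (0:ℝ) < 2^k := fun k => pow_pos (by norm_num) k
  -- the dominating radial function
  set H : ℂ → ENNReal := fun z =>
    ENNReal.ofReal (q (‖z‖) / (‖z‖)^2) with hH
  -- dyadic annuli
  set A : ℕ → Set ℂ := fun n =>
    {z : ℂ | (2:ℝ)^n < ‖z‖ ∧ ‖z‖ ≤ 2^(n+1)} with hA
  have hAmeas : ∀ n, MeasurableSet (A n) := by
    intro n
    have h1 : MeasurableSet {z : ℂ | (2:ℝ)^n < ‖z‖} :=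
      measurableSet_lt measurable_const continuous_norm.measurable
    have h2 : MeasurableSet {z : ℂ | ‖z‖ ≤ (2:ℝ)^(n+1)} :=
      measurableSet_le continuous_norm.measurable measurable_const
    exact h1.inter h2
  have hScover : S ⊆ ⋃ n, A n := by
    intro z hz
    obtain ⟨n, hn1, hn2⟩ := exists_dyadic hz.1
    exact Set.mem_iUnion.2 ⟨n, hn1, hn2⟩
  -- finiteness of the real integral, in ENNReal form
  set I : ENNReal := ∫⁻ y in Set.Ici (1:ℝ), ENNReal.ofReal (q y / y^2) with hI
  have hIfin : I < ⊤ := by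
    have hfin := hqint.hasFiniteIntegral
    rw [HasFiniteIntegral] at hfin
    refine lt_of_le_of_lt (lintegral_mono fun y => ?_) hfin
    rw [Real.enorm_eq_ofReal_abs]
    exact ENNReal.ofReal_le_ofReal (le_abs_self _)
  -- lower bound for the integral over each dyadic interval
  have hIoc : ∀ n : ℕ, ENNReal.ofReal (Q n / 2^(n+3)) ≤
      ∫⁻ y in Set.Ioc ((2:ℝ)^(n+1)) ((2:ℝ)^(n+2)), ENNReal.ofReal (q y / y^2) := by
    intro n
    have hconst : ∫⁻ y in Set.Ioc ((2:ℝ)^(n+1)) ((2:ℝ)^(n+2)),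
        (ENNReal.ofReal (Q n / ((2:ℝ)^(n+2))^2)) = ENNReal.ofReal (Q n / 2^(n+3)) := by
      rw [setLIntegral_const, Real.volume_Ioc,
        ← ENNReal.ofReal_mul (div_nonneg (hQ0 n) (by positivity))]
      congr 1
      have h1 : (2:ℝ)^(n+2) - 2^(n+1) = 2^(n+1) := by ring
      rw [h1]
      field_simp
      ring
    rw [← hconst]
    refine setLIntegral_mono' measurableSet_Ioc fun y hy => ?_
    apply ENNReal.ofReal_le_ofReal
    have hy1 : (2:ℝ)^(n+1) ≤ y := hy.1.le
    have hy0 : (0:ℝ) < y := lt_of_lt_of_le (hpow_pos _) hy1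
    have hnum : Q n ≤ q y := hqmono (Set.mem_Ici.2 (hpow_pos _).le)
      (Set.mem_Ici.2 hy0.le) hy1
    have hden : y^2 ≤ ((2:ℝ)^(n+2))^2 := by
      apply pow_le_pow_left₀ hy0.le hy.2
    exact div_le_div₀ (hq0 _) hnum (by positivity) hden
  -- sum of the dyadic lower bounds is at most I
  have hsum_le_I : ∑' n : ℕ, ENNReal.ofReal (Q n / 2^(n+3)) ≤ I := by
    refine le_trans (ENNReal.tsum_le_tsum hIoc) ?_
    rw [← lintegral_iUnion (fun n => measurableSet_Ioc) ?_]
    · refine lintegral_mono_set ?_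
      intro y hy
      obtain ⟨n, hn⟩ := Set.mem_iUnion.1 hy
      have : (1:ℝ) ≤ 2^(n+1) := one_le_pow₀ (by norm_num)
      exact Set.mem_Ici.2 (le_of_lt (lt_of_le_of_lt this hn.1))
    · intro m n hmn
      apply Set.disjoint_left.2
      intro y hym hyn
      rcases lt_or_gt_of_ne hmn with h | h
      · have h1 : (2:ℝ)^(m+2) ≤ 2^(n+1) := pow_le_pow_right₀ (by norm_num) (by omega)
        exact absurd hyn.1 (not_lt.2 (hym.2.trans h1))
      · have h1 : (2:ℝ)^(n+2) ≤ 2^(m+1) := pow_le_pow_right₀ (by norm_num) (by omega)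
        exact absurd hym.1 (not_lt.2 ((hyn.2.trans h1)))
  -- setup C' = max C 0
  set C' : ℝ := max C 0 with hC'
  have hC'0 : 0 ≤ C' := le_max_right _ _
  -- bound the integral over each annulus
  have hann : ∀ n : ℕ, ∫⁻ z in A n, H z ∂η ≤
      ENNReal.ofReal (16 * C') * ENNReal.ofReal (Q n / 2^(n+3)) := by
    intro n
    have step1 : ∫⁻ z in A n, H z ∂η ≤
        ENNReal.ofReal (Q n / ((2:ℝ)^n)^2) * η (A n) := by
      rw [← setLIntegral_const]
      refine setLIntegral_mono' (hAmeas n) fun z hz => ?_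
      apply ENNReal.ofReal_le_ofReal
      have hz0 : (0:ℝ) < ‖z‖ := (hpow_pos n).trans hz.1
      have hnum : q (‖z‖) ≤ Q n := hqmono (Set.mem_Ici.2 (norm_nonneg z))
        (Set.mem_Ici.2 (hpow_pos _).le) hz.2
      have hden : ((2:ℝ)^n)^2 ≤ (‖z‖)^2 :=
        pow_le_pow_left₀ (hpow_pos n).le hz.1.le 2
      exact div_le_div₀ (hq0 _) hnum (by positivity) hden
    have hηA : η (A n) ≤ ENNReal.ofReal (C' * 2^(n+1)) := by
      have hsub : A n ⊆ Metric.closedBall 0 ((2:ℝ)^(n+1)) := by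
        intro z hz
        rw [Metric.mem_closedBall, Complex.dist_eq, sub_zero]
        exact hz.2
      refine le_trans (measure_mono hsub) (le_trans (hC _ (one_le_pow₀ (by norm_num))) ?_)
      exact ENNReal.ofReal_le_ofReal (mul_le_mul_of_nonneg_right (le_max_left _ _) (hpow_pos _).le)
    calc ∫⁻ z in A n, H z ∂η
        ≤ ENNReal.ofReal (Q n / ((2:ℝ)^n)^2) * ENNReal.ofReal (C' * 2^(n+1)) :=
          le_trans step1 (mul_le_mul_right hηA _)
      _ = ENNReal.ofReal (Q n / ((2:ℝ)^n)^2 * (C' * 2^(n+1))) :=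
          (ENNReal.ofReal_mul (div_nonneg (hQ0 n) (by positivity))).symm
      _ = ENNReal.ofReal (16 * C' * (Q n / 2^(n+3))) := by
          congr 1
          field_simp
          ring
      _ = ENNReal.ofReal (16 * C') * ENNReal.ofReal (Q n / 2^(n+3)) :=
          ENNReal.ofReal_mul (mul_nonneg (by norm_num) hC'0)
  -- now the main estimate
  constructor
  · exact hfmeas.aestronglyMeasurable
  · rw [HasFiniteIntegral]
    -- a.e. bound on S
    have hae : ∀ᵐ z ∂(η.restrict S), ‖(1/z).re‖ₑ ≤ H z := by
      have h1 : ∀ᵐ z ∂(η.restrict S), z ∈ S := ae_restrict_mem hSmeas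
      have h2 : ∀ᵐ z ∂(η.restrict S), |z.re| ≤ q |z.im| := by
        rw [ae_restrict_iff' hSmeas]
        have : η {z : ℂ | ¬ |z.re| ≤ q |z.im|} = 0 := hsupp
        filter_upwards [measure_eq_zero_iff_ae_notMem.1 this] with z hz _
        simpa using hz
      filter_upwards [h1, h2] with z hzS hzq
      have hz0 : (0:ℝ) < ‖z‖ := lt_trans one_pos hzS.1
      have hre : (1/z).re = z.re / Complex.normSq z := by rw [one_div, Complex.inv_re]
      have hnn : 0 ≤ (1/z).re := by
        rw [hre]
        exact div_nonneg hzS.2.le (Complex.normSq_nonneg z)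
      rw [← ofReal_norm_eq_enorm, Real.norm_of_nonneg hnn]
      apply ENNReal.ofReal_le_ofReal
      rw [hre, ← Complex.sq_norm]
      have hnum : z.re ≤ q (‖z‖) := by
        refine le_trans (le_abs_self _) (le_trans hzq ?_)
        exact hqmono (Set.mem_Ici.2 (abs_nonneg _)) (Set.mem_Ici.2 (norm_nonneg z))
          (Complex.abs_im_le_norm z)
      exact div_le_div_of_nonneg_right hnum (by positivity) |>.trans le_rfl
    calc ∫⁻ z, ‖(1/z).re‖ₑ ∂(η.restrict S)
        ≤ ∫⁻ z, H z ∂(η.restrict S) := lintegral_mono_ae hae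
      _ ≤ ∫⁻ z in ⋃ n, A n, H z ∂η := lintegral_mono_set hScover
      _ ≤ ∑' n, ∫⁻ z in A n, H z ∂η := lintegral_iUnion_le _ _
      _ ≤ ∑' n, ENNReal.ofReal (16 * C') * ENNReal.ofReal (Q n / 2^(n+3)) :=
          ENNReal.tsum_le_tsum hann
      _ = ENNReal.ofReal (16 * C') * ∑' n, ENNReal.ofReal (Q n / 2^(n+3)) :=
          ENNReal.tsum_mul_left
      _ ≤ ENNReal.ofReal (16 * C') * I := mul_le_mul_right hsum_le_I _
      _ < ⊤ := ENNReal.mul_lt_top ENNReal.ofReal_lt_top hIfin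
end

section
/- Let Q : [1,∞) → ℝ₊ be increasing with ∫_1^∞ Q(y)/y² dy < ∞, and let n : [1,∞) → ℝ₊ be increasing with n(t) ≤ Ct for some constant C and all t ≥ 1. Then the Lebesgue–Stieltjes integral ∫_1^∞ Q(y)/y² dn(y) is finite. -/
open MeasureTheory Set

lemma my_exists_dyadic (x : ℝ) (hx : 1 < x) : ∃ k : ℕ, (2:ℝ)^k < x ∧ x ≤ 2^(k+1) := by
  classical
  have h : ∃ m : ℕ, x ≤ 2^(m+1) := by
    obtain ⟨m, hm⟩ := pow_unbounded_of_one_lt x (by norm_num : (1:ℝ) < 2)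
    exact ⟨m, hm.le.trans (pow_le_pow_right₀ (by norm_num) (Nat.le_succ m))⟩
  refine ⟨Nat.find h, ?_, Nat.find_spec h⟩
  rcases Nat.eq_zero_or_pos (Nat.find h) with h0 | h0
  · simpa [h0] using hx
  · have hlt : Nat.find h - 1 < Nat.find h := Nat.sub_lt h0 one_pos
    have := Nat.find_min h hlt
    push_neg at this
    have heq : Nat.find h - 1 + 1 = Nat.find h := Nat.succ_pred_eq_of_pos h0
    rwa [heq] at this

lemma my_union_dyadic : Ioi (1:ℝ) = ⋃ k : ℕ, Ioc ((2:ℝ)^k) (2^(k+1)) := by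
  ext x
  simp only [mem_Ioi, mem_iUnion, mem_Ioc]
  constructor
  · exact fun hx => my_exists_dyadic x hx
  · rintro ⟨k, h1, h2⟩
    exact lt_of_le_of_lt (one_le_pow₀ (by norm_num)) h1

/-- If `Q : [1,∞) → ℝ₊` is increasing with `∫_1^∞ Q(y)/y² dy < ∞` and `n` is an
increasing (Stieltjes) function with `n(t) ≤ C t` for `t ≥ 1`, then the
Lebesgue–Stieltjes integral `∫_1^∞ Q(y)/y² dn(y)` is finite. -/
theorem stmt3
    (Q : ℝ → ℝ) (hQ0 : ∀ y, 1 ≤ y → 0 ≤ Q y) (hQmono : MonotoneOn Q (Set.Ici 1))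
    (hQint : IntegrableOn (fun y : ℝ => Q y / y ^ 2) (Set.Ici 1))
    (n : StieltjesFunction ℝ) (C : ℝ)
    (hn0 : ∀ t, 1 ≤ t → 0 ≤ n t) (hn : ∀ t, 1 ≤ t → n t ≤ C * t) :
    IntegrableOn (fun y : ℝ => Q y / y ^ 2) (Set.Ioi 1) n.measure := by
  classical
  have hC : 0 ≤ C := by
    have := (hn0 1 le_rfl).trans (hn 1 le_rfl)
    linarith
  set Q' : ℝ → ℝ := fun y => Q (max y 1) with hQ'def
  have hQ'eq : ∀ y : ℝ, 1 ≤ y → Q' y = Q y := fun y hy => by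
    simp [hQ'def, max_eq_left hy]
  have hQ'mono : Monotone Q' := fun a b hab =>
    hQmono (le_max_right a 1) (le_max_right b 1) (max_le_max hab le_rfl)
  have hQ'0 : ∀ y, 0 ≤ Q' y := fun y => hQ0 _ (le_max_right _ _)
  have hQ'meas : Measurable Q' := hQ'mono.measurable
  have hfmeas : Measurable fun y : ℝ => Q' y / y ^ 2 :=
    hQ'meas.div ((measurable_id.pow_const 2))
  set g : ℝ → ENNReal := fun y => ENNReal.ofReal (Q' y / y ^ 2) with hgdef
  have hgmeas : Measurable g := hfmeas.ennreal_ofReal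
  -- sets
  set s : ℕ → Set ℝ := fun k => Ioc ((2:ℝ)^k) (2^(k+1)) with hsdef
  have hsm : ∀ k, MeasurableSet (s k) := fun k => measurableSet_Ioc
  have hsd : Pairwise (Function.onFun Disjoint s) := by
    have hmono : Monotone (fun k : ℕ => (2:ℝ)^k) := fun a b hab =>
      pow_le_pow_right₀ (by norm_num) hab
    have := hmono.pairwise_disjoint_on_Ioc_succ
    simpa [hsdef, Order.succ_eq_add_one, Function.onFun] using this
  have hsub : ∀ k, s k ⊆ Ici (1:ℝ) := by
    intro k y hy
    exact le_of_lt (lt_of_le_of_lt (one_le_pow₀ (by norm_num)) hy.1)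
  -- positivity facts
  have hpowpos : ∀ k : ℕ, (0:ℝ) < 2 ^ k := fun k => pow_pos (by norm_num) k
  have hone_le : ∀ k : ℕ, (1:ℝ) ≤ 2 ^ k := fun k => one_le_pow₀ (by norm_num)
  -- finiteness of Lebesgue integral of g over Ioi 1
  have hL : ∫⁻ y in Ioi (1:ℝ), g y < ⊤ := by
    have h1 : ∫⁻ y in Ioi (1:ℝ), g y ≤ ∫⁻ y in Ici (1:ℝ), g y :=
      lintegral_mono_set Ioi_subset_Ici_self
    have h2 : ∫⁻ y in Ici (1:ℝ), g y = ∫⁻ y in Ici (1:ℝ), ‖Q y / y ^ 2‖ₑ := by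
      refine setLIntegral_congr_fun measurableSet_Ici (fun y hy => ?_)
      rw [hgdef]
      have h0 : 0 ≤ Q y / y ^ 2 := div_nonneg (hQ0 y hy) (by positivity)
      simp only [hQ'eq y hy, Real.enorm_eq_ofReal h0]
    exact lt_of_le_of_lt h1 (h2 ▸ hQint.2)
  -- dyadic pieces of Lebesgue integral
  set L : ℕ → ENNReal := fun k => ∫⁻ y in s k, g y with hLdef
  have hLsum : ∑' k, L k = ∫⁻ y in Ioi (1:ℝ), g y := by
    rw [my_union_dyadic, lintegral_iUnion hsm hsd]
  -- lower bound for L k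
  have hLlower : ∀ k : ℕ, ENNReal.ofReal (Q' (2^k) / (2^(k+1))^2 * 2^k) ≤ L k := by
    intro k
    have hvol : volume (s k) = ENNReal.ofReal (2^k) := by
      rw [hsdef]
      simp only [Real.volume_Ioc]
      congr 1
      ring
    calc ENNReal.ofReal (Q' (2^k) / (2^(k+1))^2 * 2^k)
        = ENNReal.ofReal (Q' (2^k) / (2^(k+1))^2) * volume (s k) := by
          rw [hvol, ← ENNReal.ofReal_mul (div_nonneg (hQ'0 _) (by positivity))]
      _ = ∫⁻ _ in s k, ENNReal.ofReal (Q' (2^k) / (2^(k+1))^2) := by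
          rw [setLIntegral_const]
      _ ≤ L k := by
          refine setLIntegral_mono hgmeas fun y hy => ?_
          refine ENNReal.ofReal_le_ofReal ?_
          have hy1 : (2:ℝ)^k < y := hy.1
          have hy2 : y ≤ 2^(k+1) := hy.2
          have hyp : (0:ℝ) < y := lt_trans (hpowpos k) hy1
          have hQle : Q' (2^k) ≤ Q' y := hQ'mono hy1.le
          have hsq : y^2 ≤ (2^(k+1))^2 := by nlinarith
          calc Q' (2^k) / (2^(k+1))^2 ≤ Q' y / (2^(k+1))^2 :=
                div_le_div_of_nonneg_right hQle (by positivity)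
            _ ≤ Q' y / y^2 :=
                div_le_div_of_nonneg_left (hQ'0 y) (by positivity) hsq
  -- main estimate
  constructor
  · exact (hfmeas.aestronglyMeasurable).congr
      ((ae_restrict_iff' measurableSet_Ioi).2 (ae_of_all _ fun y hy =>
        show Q' y / y ^ 2 = Q y / y ^ 2 by rw [hQ'eq y (le_of_lt hy)]))
  · rw [hasFiniteIntegral_iff_ofReal ((ae_restrict_iff' measurableSet_Ioi).2
      (ae_of_all _ fun y hy => div_nonneg (hQ0 y (le_of_lt hy)) (by positivity)))]
    have hcongr : ∫⁻ y in Ioi (1:ℝ), ENNReal.ofReal (Q y / y ^ 2) ∂n.measure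
        = ∫⁻ y in Ioi (1:ℝ), g y ∂n.measure := by
      refine setLIntegral_congr_fun measurableSet_Ioi (fun y hy => ?_)
      have hy1 : (1:ℝ) ≤ y := le_of_lt hy
      rw [hgdef]
      simp only [hQ'eq y hy1]
    rw [hcongr, my_union_dyadic, lintegral_iUnion hsm hsd]
    -- bound each term
    have hterm : ∀ k : ℕ, ∫⁻ y in s k, g y ∂n.measure
        ≤ ENNReal.ofReal (16 * C) * L (k+1) := by
      intro k
      have hub : ∫⁻ y in s k, g y ∂n.measure
          ≤ ENNReal.ofReal (Q' (2^(k+1)) / (2^k)^2) * n.measure (s k) := by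
        calc ∫⁻ y in s k, g y ∂n.measure
            ≤ ∫⁻ _ in s k, ENNReal.ofReal (Q' (2^(k+1)) / (2^k)^2) ∂n.measure := by
              refine setLIntegral_mono measurable_const fun y hy => ?_
              refine ENNReal.ofReal_le_ofReal ?_
              have hy1 : (2:ℝ)^k < y := hy.1
              have hyp : (0:ℝ) < y := lt_trans (hpowpos k) hy1
              have hQle : Q' y ≤ Q' (2^(k+1)) := hQ'mono hy.2
              have hsq : ((2:ℝ)^k)^2 ≤ y^2 := by nlinarith [hpowpos k]
              calc Q' y / y^2 ≤ Q' (2^(k+1)) / y^2 :=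
                    div_le_div_of_nonneg_right hQle (by positivity)
                _ ≤ Q' (2^(k+1)) / (2^k)^2 :=
                    div_le_div_of_nonneg_left (hQ'0 _) (by positivity) hsq
          _ = ENNReal.ofReal (Q' (2^(k+1)) / (2^k)^2) * n.measure (s k) := by
              rw [setLIntegral_const]
      have hmeas : n.measure (s k) ≤ ENNReal.ofReal (C * 2^(k+1)) := by
        rw [hsdef]
        rw [StieltjesFunction.measure_Ioc]
        refine ENNReal.ofReal_le_ofReal ?_
        have h1 := hn (2^(k+1)) (hone_le (k+1))
        have h2 := hn0 (2^k) (hone_le k)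
        linarith
      have hub2 : ∫⁻ y in s k, g y ∂n.measure
          ≤ ENNReal.ofReal (Q' (2^(k+1)) / (2^k)^2 * (C * 2^(k+1))) := by
        rw [ENNReal.ofReal_mul (div_nonneg (hQ'0 _) (by positivity))]
        exact hub.trans (mul_le_mul_right hmeas _)
      refine hub2.trans ?_
      calc ENNReal.ofReal (Q' (2^(k+1)) / (2^k)^2 * (C * 2^(k+1)))
          = ENNReal.ofReal (16 * C) * ENNReal.ofReal (Q' (2^(k+1)) / (2^(k+2))^2 * 2^(k+1)) := by
            rw [← ENNReal.ofReal_mul (by nlinarith : (0:ℝ) ≤ 16 * C)]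
            congr 1
            have h1 : ((2:ℝ)^k)^2 ≠ 0 := by positivity
            have h2 : ((2:ℝ)^(k+2))^2 ≠ 0 := by positivity
            field_simp
            ring
        _ ≤ ENNReal.ofReal (16 * C) * L (k+1) :=
            mul_le_mul_right (hLlower (k+1)) _
    calc ∑' k, ∫⁻ y in s k, g y ∂n.measure
        ≤ ∑' k, ENNReal.ofReal (16 * C) * L (k+1) := ENNReal.tsum_le_tsum hterm
      _ = ENNReal.ofReal (16 * C) * ∑' k, L (k+1) := by rw [ENNReal.tsum_mul_left]
      _ ≤ ENNReal.ofReal (16 * C) * ∑' k, L k := by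
          refine mul_le_mul_right ?_ _
          exact ENNReal.summable.tsum_le_tsum_of_inj (fun k => k+1) (fun a b h => Nat.add_right_cancel h)
            (fun c _ => zero_le) (fun b => le_rfl) ENNReal.summable
      _ < ⊤ := by
          rw [hLsum]
          exact ENNReal.mul_lt_top ENNReal.ofReal_lt_top hL
end

section
/- For z ∈ ℂ with Re z ≠ 0 and y₁ < y₂ real, define Ω(z, [iy₁, iy₂]) := ω(z, [iy₁, iy₂]) − ((y₂ − y₁)/π)·|Re(1/z)|, where ω(z, [iy₁, iy₂]) = (1/π)∫_{y₁}^{y₂} |Re z|/((Re z)² + (y − Im z)²) dy. Then for fixed y₁, y₂ there is a constant C (depending on y₁, y₂) such that |Ω(z, [iy₁, iy₂])| ≤ C/|z|² for all |z| ≥ 2·max(|y₁|,|y₂|,1). -/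
open Complex

/-- The genus-1 two-sided harmonic charge
`Ω(z,[iy₁,iy₂]) = ω(z,[iy₁,iy₂]) − ((y₂−y₁)/π)|Re(1/z)|` decays like `O(1/|z|²)`:
there is `C` (depending on `y₁, y₂`) with `|Ω(z,[iy₁,iy₂])| ≤ C/|z|²` for all
`|z| ≥ 2·max(|y₁|,|y₂|,1)` with `Re z ≠ 0`. -/
theorem stmt11 (y₁ y₂ : ℝ) (h : y₁ < y₂) :
    ∃ C : ℝ, ∀ z : ℂ, z.re ≠ 0 → 2 * max (max |y₁| |y₂|) 1 ≤ ‖z‖ →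
      _root_.abs ((1 / Real.pi) * (∫ y in y₁..y₂, |z.re| / (z.re ^ 2 + (y - z.im) ^ 2))
            - (y₂ - y₁) / Real.pi * |(1 / z).re|)
        ≤ C / ‖z‖ ^ 2 := by
  set M : ℝ := max (max |y₁| |y₂|) 1 with hM
  have hM1 : (1:ℝ) ≤ M := le_max_right _ _
  refine ⟨(y₂ - y₁) * (40 * M), ?_⟩
  intro z hx hz
  set x := z.re with hxdef
  set b := z.im with hbdef
  set r := ‖z‖ with hrdef
  have hr2 : (2:ℝ) ≤ r := le_trans (by nlinarith) hz
  have hr0 : (0:ℝ) < r := by linarith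
  have hMr : 2 * M ≤ r := hz
  have hrsq : x ^ 2 + b ^ 2 = r ^ 2 := by
    rw [hrdef, Complex.sq_norm, Complex.normSq_apply]; ring
  -- rewrite |(1/z).re|
  have hns : Complex.normSq z = r ^ 2 := by rw [hrdef, ← Complex.sq_norm]
  have hre : |(1 / z).re| = |x| / r ^ 2 := by
    rw [one_div, Complex.inv_re, hns, abs_div, _root_.abs_of_nonneg (by positivity : (0:ℝ) ≤ r ^ 2)]
  have hDpos : ∀ y : ℝ, (0:ℝ) < x ^ 2 + (y - b) ^ 2 := fun y => by positivity
  have hfc : Continuous (fun y : ℝ => |x| / (x ^ 2 + (y - b) ^ 2)) := by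
    apply continuous_const.div (by continuity)
    exact fun y => ne_of_gt (hDpos y)
  have key : (∫ y in y₁..y₂, (|x| / (x ^ 2 + (y - b) ^ 2) - |x| / r ^ 2))
      = (∫ y in y₁..y₂, |x| / (x ^ 2 + (y - b) ^ 2)) - (y₂ - y₁) * (|x| / r ^ 2) := by
    rw [intervalIntegral.integral_sub (hfc.intervalIntegrable _ _)
      (intervalIntegrable_const), intervalIntegral.integral_const, smul_eq_mul]
  have hbound : ∀ y ∈ Set.uIoc y₁ y₂,
      ‖|x| / (x ^ 2 + (y - b) ^ 2) - |x| / r ^ 2‖ ≤ 40 * M / r ^ 2 := by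
    intro y hy
    rw [Set.uIoc_of_le h.le] at hy
    have hyM : |y| ≤ M := by
      have h1 : y ≤ y₂ := hy.2
      have h2 : y₁ ≤ y := hy.1.le
      have : |y| ≤ max |y₁| |y₂| := by
        rw [abs_le]
        constructor
        · have := neg_abs_le y₁; exact le_trans (by nlinarith [le_max_left |y₁| |y₂|]) h2
        · exact le_trans h1 (le_trans (le_abs_self y₂) (le_max_right _ _))
      exact le_trans this (le_max_left _ _)
    have hyr : |y| ≤ r / 2 := by linarith
    have hD := hDpos y
    have heq : |x| / (x ^ 2 + (y - b) ^ 2) - |x| / r ^ 2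
        = |x| * (y * (2 * b - y)) / ((x ^ 2 + (y - b) ^ 2) * r ^ 2) := by
      rw [div_sub_div _ _ (ne_of_gt hD) (by positivity)]
      congr 1
      linear_combination -|x| * hrsq
    rw [heq, Real.norm_eq_abs, abs_div, _root_.abs_of_nonneg (by positivity :
      (0:ℝ) ≤ (x ^ 2 + (y - b) ^ 2) * r ^ 2), abs_mul, _root_.abs_abs]
    have hxr : |x| ≤ r := Complex.abs_re_le_norm z
    have hbr : |b| ≤ r := Complex.abs_im_le_norm z
    have h2by : |2 * b - y| ≤ 5 / 2 * r := by
      calc |2 * b - y| ≤ |2 * b| + |y| := abs_sub _ _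
        _ ≤ 2 * r + r / 2 := by
            rw [abs_mul, _root_.abs_two]
            have := abs_nonneg b
            nlinarith
        _ ≤ 5 / 2 * r := by linarith
    have hDlb : r ^ 2 / 16 ≤ x ^ 2 + (y - b) ^ 2 := by
      rcases le_or_gt |b| (3 * r / 4) with hb | hb
      · have hb2 : b ^ 2 ≤ (3 * r / 4) ^ 2 := by
          rw [← _root_.sq_abs b]; exact pow_le_pow_left₀ (abs_nonneg b) hb 2
        have he : (3 * r / 4) ^ 2 = 9 / 16 * r ^ 2 := by ring
        linarith [sq_nonneg (y - b), hrsq]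
      · have hyb : r / 4 ≤ |y - b| := by
          have h1 : |b| - |y| ≤ |b - y| := abs_sub_abs_le_abs_sub b y
          have h2 : |b - y| = |y - b| := abs_sub_comm b y
          linarith
        have hyb2 : (r / 4) ^ 2 ≤ (y - b) ^ 2 := by
          rw [← _root_.sq_abs (y - b)]
          exact pow_le_pow_left₀ (by positivity) hyb 2
        have he : (r / 4) ^ 2 = r ^ 2 / 16 := by ring
        linarith [sq_nonneg x]
    have hM0 : (0:ℝ) ≤ M := by linarith
    have hnum : |x| * |y * (2 * b - y)| ≤ 5 / 2 * M * r ^ 2 := by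
      rw [abs_mul]
      calc |x| * (|y| * |2 * b - y|)
          ≤ r * (M * (5 / 2 * r)) := by
            apply mul_le_mul hxr ?_ (by positivity) hr0.le
            exact mul_le_mul hyM h2by (abs_nonneg _) hM0
        _ = 5 / 2 * M * r ^ 2 := by ring
    calc |x| * |y * (2 * b - y)| / ((x ^ 2 + (y - b) ^ 2) * r ^ 2)
        ≤ (5 / 2 * M * r ^ 2) / (r ^ 2 / 16 * r ^ 2) := by
          apply div_le_div₀ (by positivity) hnum (by positivity)
          exact mul_le_mul_of_nonneg_right hDlb (by positivity)
      _ = 40 * M / r ^ 2 := by field_simp; ring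
  have hint : |∫ y in y₁..y₂, (|x| / (x ^ 2 + (y - b) ^ 2) - |x| / r ^ 2)|
      ≤ 40 * M / r ^ 2 * |y₂ - y₁| :=
    intervalIntegral.norm_integral_le_of_norm_le_const hbound
  have hpi : (0:ℝ) < Real.pi := Real.pi_pos
  have hexpr : (1 / Real.pi) * (∫ y in y₁..y₂, |x| / (x ^ 2 + (y - b) ^ 2))
      - (y₂ - y₁) / Real.pi * |(1 / z).re|
      = (1 / Real.pi) * (∫ y in y₁..y₂, (|x| / (x ^ 2 + (y - b) ^ 2) - |x| / r ^ 2)) := by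
    rw [key, hre]; ring
  rw [hexpr, abs_mul, _root_.abs_of_nonneg (by positivity : (0:ℝ) ≤ 1 / Real.pi)]
  have hpile : 1 / Real.pi ≤ 1 := by
    rw [div_le_one hpi]; linarith [Real.pi_gt_three]
  have habs : |y₂ - y₁| = y₂ - y₁ := abs_of_pos (by linarith)
  rw [habs] at hint
  have h1 : 1 / Real.pi * |∫ y in y₁..y₂, (|x| / (x ^ 2 + (y - b) ^ 2) - |x| / r ^ 2)|
      ≤ 1 * (40 * M / r ^ 2 * (y₂ - y₁)) := by
    apply mul_le_mul hpile hint (abs_nonneg _) (by norm_num)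
  calc 1 / Real.pi * |∫ y in y₁..y₂, (|x| / (x ^ 2 + (y - b) ^ 2) - |x| / r ^ 2)|
      ≤ 1 * (40 * M / r ^ 2 * (y₂ - y₁)) := h1
    _ = (y₂ - y₁) * (40 * M) / r ^ 2 := by field_simp
end
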